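/- Let W be a Hilbert C*-module over a C*-algebra A, let V be a submodule of W, and let φ : V → W be a mapping satisfying ⟨φ(x), φ(y)⟩ = ⟨x, y⟩ for all x, y ∈ V and φ(V) ⊆ V^⊥, where V^⊥ = {x ∈ W : ⟨x, y⟩ = 0 for all y ∈ V}. Let W₀ = V + φ(V). If G is a complex normed space and f : W → G is a continuous orthogonally additive mapping, then there exist continuous mappings T : W → G and S : W × W → G such that T is additive on W₀, S is sesquilinear and orthogonality preserving on W₀ × W₀, and f(x) = T(x) + S(x, x) for all x ∈ W₀. -/

import Mathlib

/-- A Hilbert C*-module structure on `W` over a C*-algebra `A`: a right `A`-action `smul`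
and an `A`-valued inner product `inner` satisfying the usual axioms, whose induced norm
`‖⟨x,x⟩‖ ^ (1/2)` coincides with the (complete) norm of `W`.  Positivity `⟨x,x⟩ ≥ 0` is
encoded through its C*-algebraic characterization `∃ b, ⟨x,x⟩ = b* ⬝ b`. -/
structure HilbertModule (A : Type*) (W : Type*)
    [NonUnitalNormedRing A] [StarRing A] [CStarRing A] [NormedSpace ℂ A]
    [IsScalarTower ℂ A A] [SMulCommClass ℂ A A] [StarModule ℂ A] [CompleteSpace A]
    [NormedAddCommGroup W] [NormedSpace ℂ W] [CompleteSpace W] : Type _ where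
  smul : W → A → W
  inner : W → W → A
  add_smul' : ∀ x y a, smul (x + y) a = smul x a + smul y a
  smul_add' : ∀ x a b, smul x (a + b) = smul x a + smul x b
  smul_assoc' : ∀ x a b, smul (smul x a) b = smul x (a * b)
  smul_complex₁ : ∀ (c : ℂ) x a, smul (c • x) a = c • smul x a
  smul_complex₂ : ∀ (c : ℂ) x a, smul x (c • a) = c • smul x a
  inner_add_left : ∀ x y z, inner (x + y) z = inner x z + inner y z
  inner_add_right : ∀ x y z, inner x (y + z) = inner x y + inner x z
  inner_smul_right : ∀ x y a, inner x (smul y a) = inner x y * a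
  inner_smul_complex : ∀ (c : ℂ) x y, inner x (c • y) = c • inner x y
  star_inner : ∀ x y, star (inner x y) = inner y x
  inner_self_nonneg : ∀ x, ∃ a, inner x x = star a * a
  inner_self_eq_zero : ∀ x, inner x x = 0 ↔ x = 0
  norm_sq_eq : ∀ x, ‖x‖ ^ 2 = ‖inner x x‖

section AuxInner

variable {A W : Type*}
    [NonUnitalNormedRing A] [StarRing A] [CStarRing A] [NormedSpace ℂ A]
    [IsScalarTower ℂ A A] [SMulCommClass ℂ A A] [StarModule ℂ A] [CompleteSpace A]
    [NormedAddCommGroup W] [NormedSpace ℂ W] [CompleteSpace W]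
    (M : HilbertModule A W)

lemma aux_inner_zero_right (x : W) : M.inner x 0 = 0 := by
  have h := M.inner_add_right x 0 0
  rw [add_zero] at h
  exact left_eq_add.mp h

lemma aux_inner_zero_left (x : W) : M.inner 0 x = 0 := by
  rw [← M.star_inner x 0, aux_inner_zero_right, star_zero]

lemma aux_inner_neg_right (x y : W) : M.inner x (-y) = - M.inner x y := by
  have h := M.inner_add_right x y (-y)
  rw [add_neg_cancel, aux_inner_zero_right] at h
  exact eq_neg_of_add_eq_zero_right h.symm

lemma aux_inner_neg_left (x y : W) : M.inner (-x) y = - M.inner x y := by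
  rw [← M.star_inner y (-x), aux_inner_neg_right, star_neg, M.star_inner]

lemma aux_inner_sub_right (x y z : W) : M.inner x (y - z) = M.inner x y - M.inner x z := by
  rw [sub_eq_add_neg, M.inner_add_right, aux_inner_neg_right, ← sub_eq_add_neg]

lemma aux_inner_sub_left (x y z : W) : M.inner (x - y) z = M.inner x z - M.inner y z := by
  rw [sub_eq_add_neg, M.inner_add_left, aux_inner_neg_left, ← sub_eq_add_neg]

lemma aux_inner_smul_left (c : ℂ) (x y : W) :
    M.inner (c • x) y = (starRingEnd ℂ) c • M.inner x y := by
  rw [← M.star_inner y (c • x), M.inner_smul_complex, star_smul, M.star_inner]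
  simp [Complex.star_def]

lemma aux_re_im_smul {G : Type*} [NormedAddCommGroup G] [NormedSpace ℂ G] (c : ℂ) (g : G) :
    c.re • g + c.im • (Complex.I • g) = c • g := by
  rw [← Complex.coe_smul, ← Complex.coe_smul, smul_smul, ← add_smul, Complex.re_add_im]

lemma aux_re_im_smul' {G : Type*} [NormedAddCommGroup G] [NormedSpace ℂ G] (c : ℂ) (g : G) :
    c.re • g + c.im • (-(Complex.I • g)) = (starRingEnd ℂ) c • g := by
  have hconj : (starRingEnd ℂ) c = (c.re:ℂ) - (c.im:ℂ) * Complex.I := by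
    apply Complex.ext <;> simp
  rw [hconj, smul_neg, ← sub_eq_add_neg, ← Complex.coe_smul, ← Complex.coe_smul,
      smul_smul, ← sub_smul]

end AuxInner

set_option maxHeartbeats 2000000

/-- Theorem 3.1 (ii).
Let `W` be a Hilbert C*-module over a C*-algebra `A`, `V` a submodule of `W`, and
`φ : V → W` a morphism (`⟨φx, φy⟩ = ⟨x, y⟩`) with `φ(V) ⊆ V^⊥`.  Let `W₀ = V + φ(V)`.
If `G` is a complex normed space and `f : W → G` is a continuous orthogonally additive
mapping, then `f(x) = T(x) + S(x,x)` on `W₀` with `T : W → G` continuous and additive on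
`W₀` and `S : W × W → G` continuous, sesquilinear and orthogonality preserving on
`W₀ × W₀`. -/
theorem continuous_orthogonally_additive_module_decomposition
    {A W : Type*}
    [NonUnitalNormedRing A] [StarRing A] [CStarRing A] [NormedSpace ℂ A]
    [IsScalarTower ℂ A A] [SMulCommClass ℂ A A] [StarModule ℂ A] [CompleteSpace A]
    [NormedAddCommGroup W] [NormedSpace ℂ W] [CompleteSpace W]
    (M : HilbertModule A W)
    {G : Type*} [NormedAddCommGroup G] [NormedSpace ℂ G]
    (V : Set W)
    (hV0 : (0 : W) ∈ V)
    (hVadd : ∀ x ∈ V, ∀ y ∈ V, x + y ∈ V)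
    (hVsmulC : ∀ (c : ℂ), ∀ x ∈ V, c • x ∈ V)
    (hVsmulA : ∀ x ∈ V, ∀ a : A, M.smul x a ∈ V)
    (φ : W → W)
    (hφmor : ∀ x ∈ V, ∀ y ∈ V, M.inner (φ x) (φ y) = M.inner x y)
    (hφperp : ∀ x ∈ V, ∀ y ∈ V, M.inner (φ x) y = 0)
    (W₀ : Set W) (hW₀ : W₀ = {w : W | ∃ u ∈ V, ∃ v ∈ V, u + φ v = w})
    (f : W → G) (hfc : Continuous f)
    (hf : ∀ x y : W, M.inner x y = 0 → f (x + y) = f x + f y) :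
    ∃ (T : W → G) (S : W → W → G),
      Continuous T ∧ Continuous (fun p : W × W => S p.1 p.2) ∧
      (∀ x ∈ W₀, ∀ y ∈ W₀, T (x + y) = T x + T y) ∧
      (∀ x ∈ W₀, ∀ y ∈ W₀, ∀ z ∈ W₀, S (x + y) z = S x z + S y z) ∧
      (∀ x ∈ W₀, ∀ y ∈ W₀, ∀ z ∈ W₀, S x (y + z) = S x y + S x z) ∧
      (∀ (c : ℂ), ∀ x ∈ W₀, ∀ y ∈ W₀, S (c • x) y = c • S x y) ∧
      (∀ (c : ℂ), ∀ x ∈ W₀, ∀ y ∈ W₀, S x (c • y) = (starRingEnd ℂ) c • S x y) ∧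
      (∀ x ∈ W₀, ∀ y ∈ W₀, M.inner x y = 0 → S x y = 0) ∧
      (∀ x ∈ W₀, f x = T x + S x x) := by
  -- membership description of `W₀`
  have hmem : ∀ w : W, w ∈ W₀ ↔ ∃ u ∈ V, ∃ v ∈ V, u + φ v = w := by
    intro w; rw [hW₀]; exact Iff.rfl
  -- basic closure properties of `V`
  have hVneg : ∀ r ∈ V, -r ∈ V := by
    intro r hr
    have := hVsmulC (-1) r hr
    rwa [neg_one_smul] at this
  have hVsub : ∀ p ∈ V, ∀ r ∈ V, p - r ∈ V := by
    intro p hp r hr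
    rw [sub_eq_add_neg]
    exact hVadd p hp _ (hVneg r hr)
  -- properties of φ
  have hperp' : ∀ x ∈ V, ∀ y ∈ V, M.inner x (φ y) = 0 := by
    intro x hx y hy
    rw [← M.star_inner (φ y) x, hφperp y hy x hx, star_zero]
  have hφ0 : φ 0 = 0 := by
    have h := hφmor 0 hV0 0 hV0
    rw [(M.inner_self_eq_zero (0:W)).mpr rfl] at h
    exact (M.inner_self_eq_zero (φ 0)).mp h
  have hφadd : ∀ u ∈ V, ∀ v ∈ V, φ (u + v) = φ u + φ v := by
    intro u hu v hv
    have huv : u + v ∈ V := hVadd u hu v hv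
    have key : ∀ w ∈ V, M.inner (φ (u+v) - (φ u + φ v)) (φ w) = 0 := by
      intro w hw
      rw [aux_inner_sub_left, M.inner_add_left, hφmor _ huv _ hw, hφmor _ hu _ hw,
          hφmor _ hv _ hw, M.inner_add_left, sub_self]
    have hzz : M.inner (φ (u+v) - (φ u + φ v)) (φ (u+v) - (φ u + φ v)) = 0 := by
      rw [aux_inner_sub_right, M.inner_add_right, key _ huv, key _ hu, key _ hv]
      simp
    exact sub_eq_zero.mp ((M.inner_self_eq_zero _).mp hzz)
  have hφsmul : ∀ (c : ℂ), ∀ v ∈ V, φ (c • v) = c • φ v := by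
    intro c v hv
    have hcv : c • v ∈ V := hVsmulC c v hv
    have key : ∀ w ∈ V, M.inner (φ (c • v) - c • φ v) (φ w) = 0 := by
      intro w hw
      rw [aux_inner_sub_left, hφmor _ hcv _ hw, aux_inner_smul_left, aux_inner_smul_left,
          hφmor _ hv _ hw, sub_self]
    have hzz : M.inner (φ (c • v) - c • φ v) (φ (c • v) - c • φ v) = 0 := by
      rw [aux_inner_sub_right, M.inner_smul_complex, key _ hcv, key _ hv]
      simp
    exact sub_eq_zero.mp ((M.inner_self_eq_zero _).mp hzz)
  have hφneg : ∀ v ∈ V, φ (-v) = - φ v := by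
    intro v hv
    have := hφsmul (-1) v hv
    rwa [neg_one_smul, neg_one_smul] at this
  have hφsub : ∀ u ∈ V, ∀ v ∈ V, φ (u - v) = φ u - φ v := by
    intro u hu v hv
    rw [sub_eq_add_neg, hφadd u hu _ (hVneg v hv), hφneg v hv, ← sub_eq_add_neg]
  -- closure properties of W₀
  have hW0zero : (0:W) ∈ W₀ := (hmem 0).2 ⟨0, hV0, 0, hV0, by rw [hφ0, add_zero]⟩
  have hW0add : ∀ x ∈ W₀, ∀ y ∈ W₀, x + y ∈ W₀ := by
    intro x hx y hy
    obtain ⟨u1, hu1, v1, hv1, rfl⟩ := (hmem x).1 hx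
    obtain ⟨u2, hu2, v2, hv2, rfl⟩ := (hmem y).1 hy
    exact (hmem _).2 ⟨u1+u2, hVadd u1 hu1 u2 hu2, v1+v2, hVadd v1 hv1 v2 hv2,
      by rw [hφadd v1 hv1 v2 hv2]; abel⟩
  have hW0smul : ∀ (c:ℂ), ∀ x ∈ W₀, c • x ∈ W₀ := by
    intro c x hx
    obtain ⟨u, hu, v, hv, rfl⟩ := (hmem x).1 hx
    exact (hmem _).2 ⟨c•u, hVsmulC c u hu, c•v, hVsmulC c v hv,
      by rw [hφsmul c v hv, smul_add]⟩
  have hW0neg : ∀ x ∈ W₀, -x ∈ W₀ := by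
    intro x hx
    have := hW0smul (-1) x hx
    rwa [neg_one_smul] at this
  have hW0sub : ∀ x ∈ W₀, ∀ y ∈ W₀, x - y ∈ W₀ := by
    intro x hx y hy
    rw [sub_eq_add_neg]
    exact hW0add x hx _ (hW0neg y hy)
  -- f vanishes at 0
  have hzz0 : M.inner (0:W) 0 = 0 := (M.inner_self_eq_zero 0).mpr rfl
  have hf0 : f 0 = 0 := by
    have h := hf 0 0 hzz0
    rw [add_zero] at h
    exact left_eq_add.mp h
  -- odd and even parts of f
  set T : W → G := fun w => (2⁻¹:ℂ) • (f w - f (-w)) with hTdef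
  set Q : W → G := fun w => (2⁻¹:ℂ) • (f w + f (-w)) with hQdef
  have hT0 : T 0 = 0 := by simp [hTdef]
  have hQ0 : Q 0 = 0 := by simp [hQdef, hf0]
  have hQeven : ∀ w, Q (-w) = Q w := by
    intro w; simp only [hQdef]; rw [neg_neg, add_comm]
  have hTodd : ∀ w, T (-w) = - T w := by
    intro w; simp only [hTdef]; rw [neg_neg, ← smul_neg, neg_sub]
  have hinneg : ∀ x y : W, M.inner x y = 0 → M.inner (-x) (-y) = 0 := by
    intro x y h
    rw [aux_inner_neg_left, aux_inner_neg_right, neg_neg, h]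
  have hQOA : ∀ x y : W, M.inner x y = 0 → Q (x+y) = Q x + Q y := by
    intro x y h
    simp only [hQdef]
    rw [hf x y h, neg_add, hf (-x) (-y) (hinneg x y h), ← smul_add]
    congr 1
    abel
  have hTOA : ∀ x y : W, M.inner x y = 0 → T (x+y) = T x + T y := by
    intro x y h
    simp only [hTdef]
    rw [hf x y h, neg_add, hf (-x) (-y) (hinneg x y h), ← smul_add]
    congr 1
    abel
  have hTc : Continuous T := by
    rw [hTdef]; exact (hfc.sub (hfc.comp continuous_neg)).const_smul _
  have hQc : Continuous Q := by
    rw [hQdef]; exact (hfc.add (hfc.comp continuous_neg)).const_smul _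
  have hTQ : ∀ w, f w = T w + Q w := by
    intro w
    simp only [hTdef, hQdef]
    rw [← smul_add]
    have h : f w - f (-w) + (f w + f (-w)) = (2:ℂ) • f w := by rw [two_smul]; abel
    rw [h, smul_smul]
    norm_num
  -- halving helper
  have halfG : ∀ g h : G, g + g = h + h → g = h := by
    intro g h e
    have e2 : (2:ℂ) • g = (2:ℂ) • h := by rw [two_smul, two_smul]; exact e
    exact smul_right_injective G (two_ne_zero (α := ℂ)) e2
  -- Jensen ⇒ additive helper
  have hjensen : ∀ (g : W → G) (U : Set W), (∀ a ∈ U, ∀ b ∈ U, a + b ∈ U) →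
      (∀ (c:ℂ), ∀ a ∈ U, c • a ∈ U) → g 0 = 0 →
      (∀ p ∈ U, ∀ r ∈ U, g (p+r) + g (p-r) = g p + g p) →
      ∀ a ∈ U, ∀ b ∈ U, g (a+b) = g a + g b := by
    intro g U hUadd hUsmul hg0 hrel a ha b hb
    have hbneg : (-1:ℂ) • b ∈ U := hUsmul _ b hb
    have hsub : a + (-1:ℂ) • b ∈ U := hUadd a ha _ hbneg
    have hp : (2⁻¹:ℂ) • (a+b) ∈ U := hUsmul _ _ (hUadd a ha b hb)
    have hr : (2⁻¹:ℂ) • (a + (-1:ℂ) • b) ∈ U := hUsmul _ _ hsub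
    have e1 := hrel _ hp _ hr
    have ea : (2⁻¹:ℂ) • (a+b) + (2⁻¹:ℂ) • (a + (-1:ℂ) • b) = a := by module
    have eb : (2⁻¹:ℂ) • (a+b) - (2⁻¹:ℂ) • (a + (-1:ℂ) • b) = b := by module
    rw [ea, eb] at e1
    have e2 := hrel _ hp _ hp
    have ep : (2⁻¹:ℂ) • (a+b) + (2⁻¹:ℂ) • (a+b) = a + b := by module
    rw [ep, sub_self, hg0, add_zero] at e2
    exact e2.trans e1.symm
  -- the master orthogonality relation
  have hmaster : ∀ (h : W → G), (∀ x y : W, M.inner x y = 0 → h (x+y) = h x + h y) →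
      ∀ c : ℂ, (starRingEnd ℂ) c * c = 1 → ∀ p ∈ V, ∀ r ∈ V,
      h (p+r) + h (φ (c • (p - r))) = h p + h (φ (c • p)) + h r + h (φ ((-c) • r)) := by
    intro h hOA c hc p hp r hr
    have hpr : p - r ∈ V := hVsub p hp r hr
    have hcp : c • p ∈ V := hVsmulC c p hp
    have hcr : (-c) • r ∈ V := hVsmulC (-c) r hr
    have hcpr : c • (p - r) ∈ V := hVsmulC c _ hpr
    have hpradd : p + r ∈ V := hVadd p hp r hr
    have o1 : M.inner p (φ (c • p)) = 0 := hperp' p hp _ hcp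
    have o2 : M.inner r (φ ((-c) • r)) = 0 := hperp' r hr _ hcr
    have oPR : M.inner (p + φ (c • p)) (r + φ ((-c) • r)) = 0 := by
      rw [M.inner_add_left, M.inner_add_right, M.inner_add_right,
          hperp' p hp _ hcr, hφperp _ hcp r hr, hφmor _ hcp _ hcr,
          aux_inner_smul_left, M.inner_smul_complex, smul_smul]
      have hcc : (starRingEnd ℂ) c * (-c) = -1 := by rw [mul_neg, hc]
      rw [hcc, neg_one_smul]
      abel
    have hpt : p + φ (c • p) + (r + φ ((-c) • r)) = (p + r) + φ (c • (p - r)) := by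
      have e : c • (p - r) = c • p + (-c) • r := by module
      rw [e, hφadd _ hcp _ hcr]
      abel
    have hsum := hOA _ _ oPR
    rw [hpt, hOA p _ o1, hOA r _ o2, hOA _ _ (hperp' _ hpradd _ hcpr)] at hsum
    rw [hsum]
    abel
  ------------------------------------------------------------------
  -- T : additivity on W₀
  ------------------------------------------------------------------
  have hMT' : ∀ p ∈ V, ∀ r ∈ V,
      T (p+r) + T (φ (p-r)) = T p + T (φ p) + T r - T (φ r) := by
    intro p hp r hr
    have h := hmaster T hTOA 1 (by norm_num) p hp r hr
    rw [one_smul, one_smul, neg_one_smul, hφneg r hr, hTodd] at h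
    rw [h]
    abel
  set sg : W → G := fun x => T x + T (φ x) with hsgdef
  set dg : W → G := fun x => T x - T (φ x) with hdgdef
  have hsg0 : sg 0 = 0 := by simp [hsgdef, hφ0, hT0]
  have hdg0 : dg 0 = 0 := by simp [hdgdef, hφ0, hT0]
  have hsgJ : ∀ p ∈ V, ∀ r ∈ V, sg (p+r) + sg (p-r) = sg p + sg p := by
    intro p hp r hr
    have e1 := hMT' p hp r hr
    have e2 := hMT' p hp (-r) (hVneg r hr)
    rw [sub_neg_eq_add, ← sub_eq_add_neg, hφneg r hr, hTodd r, hTodd] at e2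
    simp only [hsgdef]
    calc T (p+r) + T (φ (p+r)) + (T (p-r) + T (φ (p-r)))
        = (T (p+r) + T (φ (p-r))) + (T (p-r) + T (φ (p+r))) := by abel
      _ = (T p + T (φ p) + T r - T (φ r)) + (T p + T (φ p) + -T r - -T (φ r)) := by
          rw [e1, e2]
      _ = (T p + T (φ p)) + (T p + T (φ p)) := by abel
  have hdgrel : ∀ p ∈ V, ∀ r ∈ V, dg (p+r) = dg (p-r) + (dg r + dg r) := by
    intro p hp r hr
    have e1 := hMT' p hp r hr
    have e2 := hMT' p hp (-r) (hVneg r hr)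
    rw [sub_neg_eq_add, ← sub_eq_add_neg, hφneg r hr, hTodd r, hTodd] at e2
    simp only [hdgdef]
    have e3 : T (p+r) - T (φ (p+r)) =
        (T (p+r) + T (φ (p-r))) - (T (p-r) + T (φ (p+r))) + (T (p-r) - T (φ (p-r))) := by
      abel
    rw [e3, e1, e2]
    abel
  have hsgadd : ∀ a ∈ V, ∀ b ∈ V, sg (a+b) = sg a + sg b :=
    hjensen sg V hVadd hVsmulC hsg0 hsgJ
  have hdgdouble : ∀ r ∈ V, dg (r+r) = dg r + dg r := by
    intro r hr
    have h := hdgrel r hr r hr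
    rwa [sub_self, hdg0, zero_add] at h
  have hdgadd : ∀ a ∈ V, ∀ b ∈ V, dg (a+b) = dg a + dg b := by
    intro a ha b hb
    have hhb : (2⁻¹:ℂ) • b ∈ V := hVsmulC _ b hb
    have hp : a + (2⁻¹:ℂ) • b ∈ V := hVadd a ha _ hhb
    have h := hdgrel _ hp _ hhb
    have e1 : a + (2⁻¹:ℂ) • b + (2⁻¹:ℂ) • b = a + b := by module
    have e2 : a + (2⁻¹:ℂ) • b - (2⁻¹:ℂ) • b = a := by module
    rw [e1, e2] at h
    have hd := hdgdouble _ hhb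
    have e3 : (2⁻¹:ℂ) • b + (2⁻¹:ℂ) • b = b := by module
    rw [e3] at hd
    rw [h, ← hd]
  have hTrec : ∀ x : W, T x + T x = sg x + dg x := by
    intro x; simp only [hsgdef, hdgdef]; abel
  have hTφrec : ∀ x : W, T (φ x) + T (φ x) = sg x - dg x := by
    intro x; simp only [hsgdef, hdgdef]; abel
  have hTaddV : ∀ a ∈ V, ∀ b ∈ V, T (a+b) = T a + T b := by
    intro a ha b hb
    apply halfG
    rw [hTrec, hsgadd a ha b hb, hdgadd a ha b hb]
    calc sg a + sg b + (dg a + dg b) = (sg a + dg a) + (sg b + dg b) := by abel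
      _ = (T a + T a) + (T b + T b) := by rw [hTrec a, hTrec b]
      _ = (T a + T b) + (T a + T b) := by abel
  have hTφaddV : ∀ a ∈ V, ∀ b ∈ V, T (φ (a+b)) = T (φ a) + T (φ b) := by
    intro a ha b hb
    apply halfG
    rw [hTφrec, hsgadd a ha b hb, hdgadd a ha b hb]
    calc sg a + sg b - (dg a + dg b) = (sg a - dg a) + (sg b - dg b) := by abel
      _ = (T (φ a) + T (φ a)) + (T (φ b) + T (φ b)) := by rw [hTφrec a, hTφrec b]
      _ = (T (φ a) + T (φ b)) + (T (φ a) + T (φ b)) := by abel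
  have hTadd0 : ∀ x ∈ W₀, ∀ y ∈ W₀, T (x+y) = T x + T y := by
    intro x hx y hy
    obtain ⟨u1, hu1, v1, hv1, rfl⟩ := (hmem x).1 hx
    obtain ⟨u2, hu2, v2, hv2, rfl⟩ := (hmem y).1 hy
    have hre : u1 + φ v1 + (u2 + φ v2) = (u1 + u2) + φ (v1 + v2) := by
      rw [hφadd v1 hv1 v2 hv2]; abel
    rw [hre,
        hTOA _ _ (hperp' _ (hVadd u1 hu1 u2 hu2) _ (hVadd v1 hv1 v2 hv2)),
        hTOA _ _ (hperp' _ hu1 _ hv1), hTOA _ _ (hperp' _ hu2 _ hv2),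
        hTaddV u1 hu1 u2 hu2, hTφaddV v1 hv1 v2 hv2]
    abel
  ------------------------------------------------------------------
  -- Q : quadratic behaviour
  ------------------------------------------------------------------
  have hMQ : ∀ p ∈ V, ∀ r ∈ V,
      Q (p+r) + Q (φ (p-r)) = Q p + Q (φ p) + Q r + Q (φ r) := by
    intro p hp r hr
    have h := hmaster Q hQOA 1 (by norm_num) p hp r hr
    rwa [one_smul, one_smul, neg_one_smul, hφneg r hr, hQeven] at h
  have hQφ : ∀ x ∈ V, Q (φ x) = Q x := by
    have hDrel : ∀ p ∈ V, ∀ r ∈ V,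
        Q (p+r) - Q (φ (p+r)) = Q (p-r) - Q (φ (p-r)) := by
      intro p hp r hr
      have e1 := hMQ p hp r hr
      have e2 := hMQ p hp (-r) (hVneg r hr)
      rw [sub_neg_eq_add, ← sub_eq_add_neg, hQeven, hφneg r hr, hQeven] at e2
      have e3 : Q (p+r) - Q (φ (p+r)) =
          (Q (p+r) + Q (φ (p-r))) - (Q (p-r) + Q (φ (p+r))) + (Q (p-r) - Q (φ (p-r))) := by
        abel
      rw [e3, e1, e2]
      abel
    intro x hx
    have hhx : (2⁻¹:ℂ) • x ∈ V := hVsmulC _ x hx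
    have h := hDrel _ hhx _ hhx
    have e1 : (2⁻¹:ℂ) • x + (2⁻¹:ℂ) • x = x := by module
    rw [e1, sub_self, hφ0, hQ0] at h
    have h2 : Q x - Q (φ x) = 0 := by rw [h]; simp
    exact (sub_eq_zero.mp h2).symm
  have hQPV : ∀ p ∈ V, ∀ r ∈ V, Q (p+r) + Q (p-r) = Q p + Q p + (Q r + Q r) := by
    intro p hp r hr
    have h := hMQ p hp r hr
    rw [hQφ _ (hVsub p hp r hr), hQφ _ hp, hQφ _ hr] at h
    rw [h]
    abel
  have hQuniV : ∀ (c:ℂ), (starRingEnd ℂ) c * c = 1 → ∀ p ∈ V, Q (c • p) = Q p := by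
    intro c hc p hp
    have h := hmaster Q hQOA c hc p hp p hp
    rw [sub_self, smul_zero, hφ0, hQ0, add_zero] at h
    rw [hQφ _ (hVsmulC c p hp)] at h
    have e : (-c) • p = -(c • p) := by module
    rw [e, hφneg _ (hVsmulC c p hp), hQeven, hQφ _ (hVsmulC c p hp)] at h
    have hd := hQPV p hp p hp
    rw [sub_self, hQ0, add_zero] at hd
    rw [hd] at h
    apply halfG
    have e2 : Q (c•p) + Q (c•p) = (Q p + Q (c•p) + Q p + Q (c•p)) - (Q p + Q p) := by abel
    rw [e2, ← h]
    abel
  have hQnat : ∀ x ∈ V, ∀ n : ℕ, Q ((n:ℂ) • x) = ((n:ℝ)^2) • Q x := by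
    intro x hx
    have key : ∀ n : ℕ, (Q ((n:ℂ) • x) = ((n:ℝ)^2) • Q x) ∧
        (Q (((n:ℂ)+1) • x) = (((n:ℝ)+1)^2) • Q x) := by
      intro n
      induction n with
      | zero =>
        constructor
        · norm_num [hQ0]
        · norm_num
      | succ k ih =>
        obtain ⟨ih1, ih2⟩ := ih
        constructor
        · push_cast
          exact ih2
        · push_cast
          have hkx : ((k:ℂ)+1) • x ∈ V := hVsmulC _ x hx
          have h := hQPV _ hkx x hx
          have e1 : ((k:ℂ)+1) • x + x = ((k:ℂ)+1+1) • x := by module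
          have e2 : ((k:ℂ)+1) • x - x = (k:ℂ) • x := by module
          rw [e1, e2, ih1, ih2] at h
          have h2 := eq_sub_of_add_eq h
          rw [h2]
          module
    exact fun n => (key n).1
  have hQint : ∀ x ∈ V, ∀ m : ℤ, Q ((m:ℂ) • x) = ((m:ℝ)^2) • Q x := by
    intro x hx m
    rcases Int.natAbs_eq m with h | h
    · rw [h, Int.cast_natCast, Int.cast_natCast]
      exact hQnat x hx m.natAbs
    · rw [h, Int.cast_neg, Int.cast_neg, Int.cast_natCast, Int.cast_natCast,
          neg_smul, hQeven, hQnat x hx m.natAbs]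
      congr 1
      ring
  have hQrat : ∀ x ∈ V, ∀ q : ℚ, Q ((q:ℂ) • x) = ((q:ℝ)^2) • Q x := by
    intro x hx q
    have hqx : (q:ℂ) • x ∈ V := hVsmulC _ x hx
    have h1 := hQnat _ hqx q.den
    have e1 : ((q.den:ℕ):ℂ) • ((q:ℂ) • x) = ((q.num:ℤ):ℂ) • x := by
      rw [smul_smul]
      congr 1
      have h : ((q.den:ℚ)) * q = (q.num:ℚ) := by
        exact Rat.den_mul_eq_num q
      exact_mod_cast h
    rw [e1, hQint x hx q.num] at h1
    have hden : ((q.den:ℝ))^2 ≠ 0 := pow_ne_zero 2 (Nat.cast_ne_zero.mpr q.den_nz)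
    have h2 := congrArg (fun z : G => (((q.den:ℝ))^2)⁻¹ • z) h1.symm
    simp only [smul_smul] at h2
    rw [inv_mul_cancel₀ hden, one_smul] at h2
    rw [h2]
    congr 1
    rw [Rat.cast_def]
    field_simp
  have hQreal : ∀ x ∈ V, ∀ t : ℝ, Q ((t:ℂ) • x) = (t^2) • Q x := by
    intro x hx
    have hc1 : Continuous fun t : ℝ => Q ((t:ℂ) • x) :=
      hQc.comp ((Complex.continuous_ofReal).smul continuous_const)
    have hc2 : Continuous fun t : ℝ => (t^2) • Q x :=
      (continuous_pow 2).smul continuous_const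
    have keyq : ∀ q : ℚ, Q (((q:ℝ):ℂ) • x) = (((q:ℝ))^2) • Q x := by
      intro q
      push_cast
      exact hQrat x hx q
    have heq := DenseRange.equalizer Rat.denseRange_cast hc1 hc2 (funext fun q => keyq q)
    exact fun t => congrFun heq t
  have hQhomV : ∀ (c : ℂ), ∀ x ∈ V, Q (c • x) = (Complex.normSq c) • Q x := by
    intro c x hx
    rcases eq_or_ne c 0 with rfl | hc
    · simp [hQ0]
    · set t : ℝ := ‖c‖ with ht
      have ht0 : t ≠ 0 := by
        rw [ht]
        exact norm_ne_zero_iff.mpr hc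
      have h1 : Complex.normSq (c / (t:ℂ)) = 1 := by
        rw [Complex.normSq_div, Complex.normSq_ofReal, ht, ← Complex.sq_norm c, pow_two]
        exact div_self (mul_ne_zero (norm_ne_zero_iff.mpr hc) (norm_ne_zero_iff.mpr hc))
      have hu : (starRingEnd ℂ) (c / (t:ℂ)) * (c / (t:ℂ)) = 1 := by
        rw [← Complex.normSq_eq_conj_mul_self, h1, Complex.ofReal_one]
      have hne : ((t:ℝ):ℂ) ≠ 0 := Complex.ofReal_ne_zero.mpr ht0
      have hdecomp : c • x = ((t:ℂ)) • ((c / (t:ℂ)) • x) := by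
        rw [smul_smul, mul_comm ((t:ℝ):ℂ) (c / (t:ℂ)), div_mul_cancel₀ c hne]
      rw [hdecomp]
      have hux : (c / (t:ℂ)) • x ∈ V := hVsmulC _ x hx
      rw [hQreal _ hux t, hQuniV _ hu x hx]
      congr 1
      rw [← Complex.sq_norm c, ht]
  have hQpar0 : ∀ x ∈ W₀, ∀ y ∈ W₀, Q (x+y) + Q (x-y) = Q x + Q x + (Q y + Q y) := by
    intro x hx y hy
    obtain ⟨u1, hu1, v1, hv1, rfl⟩ := (hmem x).1 hx
    obtain ⟨u2, hu2, v2, hv2, rfl⟩ := (hmem y).1 hy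
    have hre1 : u1 + φ v1 + (u2 + φ v2) = (u1+u2) + φ (v1+v2) := by
      rw [hφadd v1 hv1 v2 hv2]; abel
    have hre2 : u1 + φ v1 - (u2 + φ v2) = (u1-u2) + φ (v1-v2) := by
      rw [hφsub v1 hv1 v2 hv2]; abel
    rw [hre1, hre2,
        hQOA _ _ (hperp' _ (hVadd u1 hu1 u2 hu2) _ (hVadd v1 hv1 v2 hv2)),
        hQOA _ _ (hperp' _ (hVsub u1 hu1 u2 hu2) _ (hVsub v1 hv1 v2 hv2)),
        hQOA _ _ (hperp' _ hu1 _ hv1), hQOA _ _ (hperp' _ hu2 _ hv2),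
        hQφ _ (hVadd v1 hv1 v2 hv2), hQφ _ (hVsub v1 hv1 v2 hv2), hQφ _ hv1, hQφ _ hv2]
    have h1 := hQPV u1 hu1 u2 hu2
    have h2 := hQPV v1 hv1 v2 hv2
    calc Q (u1+u2) + Q (v1+v2) + (Q (u1-u2) + Q (v1-v2))
        = (Q (u1+u2) + Q (u1-u2)) + (Q (v1+v2) + Q (v1-v2)) := by abel
      _ = (Q u1 + Q u1 + (Q u2 + Q u2)) + (Q v1 + Q v1 + (Q v2 + Q v2)) := by rw [h1, h2]
      _ = _ := by abel
  have hQhom0 : ∀ (c:ℂ), ∀ x ∈ W₀, Q (c • x) = (Complex.normSq c) • Q x := by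
    intro c x hx
    obtain ⟨u, hu, v, hv, rfl⟩ := (hmem x).1 hx
    have hre : c • (u + φ v) = c • u + φ (c • v) := by
      rw [hφsmul c v hv, smul_add]
    rw [hre, hQOA _ _ (hperp' _ (hVsmulC c u hu) _ (hVsmulC c v hv)),
        hQOA _ _ (hperp' _ hu _ hv),
        hQφ _ (hVsmulC c v hv), hQφ _ hv,
        hQhomV c u hu, hQhomV c v hv, smul_add]
  have hQI : ∀ x ∈ W₀, Q (Complex.I • x) = Q x := by
    intro x hx
    rw [hQhom0 _ x hx, Complex.normSq_I, one_smul]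
  ------------------------------------------------------------------
  -- the sesquilinear form S
  ------------------------------------------------------------------
  set S : W → W → G := fun x y => (4⁻¹:ℂ) •
    (Q (x+y) - Q (x-y) + Complex.I • Q (x + Complex.I • y) - Complex.I • Q (x - Complex.I • y))
    with hSdef
  have hSc : Continuous fun p : W × W => S p.1 p.2 := by
    simp only [hSdef]
    apply Continuous.const_smul
    have c1 : Continuous fun p : W × W => Q (p.1 + p.2) :=
      hQc.comp (continuous_fst.add continuous_snd)
    have c2 : Continuous fun p : W × W => Q (p.1 - p.2) :=
      hQc.comp (continuous_fst.sub continuous_snd)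
    have c3 : Continuous fun p : W × W => Q (p.1 + Complex.I • p.2) :=
      hQc.comp (continuous_fst.add (continuous_snd.const_smul _))
    have c4 : Continuous fun p : W × W => Q (p.1 - Complex.I • p.2) :=
      hQc.comp (continuous_fst.sub (continuous_snd.const_smul _))
    exact ((c1.sub c2).add (c3.const_smul _)).sub (c4.const_smul _)
  set Pf : W → W → G := fun a b => Q (a+b) - Q (a-b) with hPfdef
  have hPfsymm : ∀ a b : W, Pf a b = Pf b a := by
    intro a b
    simp only [hPfdef]
    have e1 : a + b = b + a := add_comm a b
    have e2 : Q (a-b) = Q (b-a) := by rw [← neg_sub a b, hQeven]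
    rw [e1, e2]
  have hPf0 : ∀ b : W, Pf 0 b = 0 := by
    intro b
    simp only [hPfdef]
    rw [zero_add, zero_sub, hQeven]
    exact sub_self _
  have hPfJ : ∀ w ∈ W₀, ∀ x ∈ W₀, ∀ y ∈ W₀, Pf (x+y) w + Pf (x-y) w = Pf x w + Pf x w := by
    intro w hw x hx y hy
    have e1 := hQpar0 _ (hW0add x hx w hw) _ hy
    have e2 := hQpar0 _ (hW0sub x hx w hw) _ hy
    simp only [hPfdef]
    have r1 : x + y + w = x + w + y := by abel
    have r2 : x + y - w = x - w + y := by abel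
    have r3 : x - y + w = x + w - y := by abel
    have r4 : x - y - w = x - w - y := by abel
    rw [r1, r2, r3, r4]
    calc (Q (x+w+y) - Q (x-w+y)) + (Q (x+w-y) - Q (x-w-y))
        = (Q (x+w+y) + Q (x+w-y)) - (Q (x-w+y) + Q (x-w-y)) := by abel
      _ = (Q (x+w) + Q (x+w) + (Q y + Q y)) - (Q (x-w) + Q (x-w) + (Q y + Q y)) := by
          rw [e1, e2]
      _ = (Q (x+w) - Q (x-w)) + (Q (x+w) - Q (x-w)) := by abel
  have hPfadd1 : ∀ w ∈ W₀, ∀ a ∈ W₀, ∀ b ∈ W₀, Pf (a+b) w = Pf a w + Pf b w := by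
    intro w hw
    exact hjensen (fun v => Pf v w) W₀ hW0add hW0smul (hPf0 w)
      (fun p hp r hr => hPfJ w hw p hp r hr)
  have hSP : ∀ x y : W, S x y = (4⁻¹:ℂ) • (Pf x y + Complex.I • Pf x (Complex.I • y)) := by
    intro x y
    simp only [hSdef, hPfdef]
    congr 1
    rw [smul_sub]
    abel
  have hSadd1 : ∀ x ∈ W₀, ∀ y ∈ W₀, ∀ z ∈ W₀, S (x + y) z = S x z + S y z := by
    intro x hx y hy z hz
    rw [hSP, hSP, hSP]
    rw [hPfadd1 z hz x hx y hy, hPfadd1 _ (hW0smul Complex.I z hz) x hx y hy]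
    module
  have hSadd2 : ∀ x ∈ W₀, ∀ y ∈ W₀, ∀ z ∈ W₀, S x (y + z) = S x y + S x z := by
    intro x hx y hy z hz
    rw [hSP, hSP, hSP]
    rw [hPfsymm x (y+z), hPfadd1 x hx y hy z hz, hPfsymm y x, hPfsymm z x]
    have e : Complex.I • (y + z) = Complex.I • y + Complex.I • z := smul_add _ _ _
    rw [e, hPfsymm x (Complex.I • y + Complex.I • z),
        hPfadd1 x hx _ (hW0smul Complex.I y hy) _ (hW0smul Complex.I z hz),
        hPfsymm (Complex.I • y) x, hPfsymm (Complex.I • z) x]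
    module
  have keyIW : ∀ w : W, Complex.I • (Complex.I • w) = -w := by
    intro w; rw [smul_smul, Complex.I_mul_I, neg_one_smul]
  have keyI : ∀ g : G, Complex.I • (Complex.I • g) = -g := by
    intro g; rw [smul_smul, Complex.I_mul_I, neg_one_smul]
  have hre1 : ∀ x y : W, Complex.I • x + y = Complex.I • (x - Complex.I • y) := by
    intro x y
    rw [smul_sub, keyIW, sub_neg_eq_add]
  have hre2 : ∀ x y : W, Complex.I • x - y = Complex.I • (x + Complex.I • y) := by
    intro x y
    rw [smul_add, keyIW, ← sub_eq_add_neg]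
  have hSI1 : ∀ x ∈ W₀, ∀ y ∈ W₀, S (Complex.I • x) y = Complex.I • S x y := by
    intro x hx y hy
    simp only [hSdef]
    rw [hre1 x y, hre2 x y,
        show Complex.I • x + Complex.I • y = Complex.I • (x+y) from (smul_add _ _ _).symm,
        show Complex.I • x - Complex.I • y = Complex.I • (x-y) from (smul_sub _ _ _).symm]
    rw [hQI _ (hW0sub x hx _ (hW0smul Complex.I y hy)),
        hQI _ (hW0add x hx _ (hW0smul Complex.I y hy)),
        hQI _ (hW0add x hx y hy), hQI _ (hW0sub x hx y hy)]
    rw [smul_comm Complex.I (4⁻¹:ℂ)]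
    congr 1
    simp only [smul_sub, smul_add, keyI]
    abel
  have hSI2 : ∀ x ∈ W₀, ∀ y ∈ W₀, S x (Complex.I • y) = -(Complex.I • S x y) := by
    intro x hx y hy
    simp only [hSdef]
    rw [show x + Complex.I • (Complex.I • y) = x - y from by rw [keyIW y, ← sub_eq_add_neg],
        show x - Complex.I • (Complex.I • y) = x + y from by rw [keyIW y, sub_neg_eq_add]]
    rw [smul_comm Complex.I (4⁻¹:ℂ), ← smul_neg]
    congr 1
    simp only [smul_sub, smul_add, keyI]
    abel
  -- real homogeneity from additivity and continuity
  have hrhom : ∀ (g : W → G), Continuous g → (∀ a ∈ W₀, ∀ b ∈ W₀, g (a+b) = g a + g b) →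
      ∀ x ∈ W₀, ∀ t : ℝ, g ((t:ℂ) • x) = t • g x := by
    intro g hgc hgadd x hx
    have hg0 : g 0 = 0 := by
      have h := hgadd 0 hW0zero 0 hW0zero
      rw [add_zero] at h
      exact left_eq_add.mp h
    have hgnat : ∀ y ∈ W₀, ∀ n : ℕ, g ((n:ℂ) • y) = (n:ℝ) • g y := by
      intro y hy n
      induction n with
      | zero => simp [hg0]
      | succ k ih =>
        have e : ((k+1:ℕ):ℂ) • y = (k:ℂ) • y + y := by push_cast; module
        rw [e, hgadd _ (hW0smul _ y hy) y hy, ih]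
        push_cast
        module
    have hgneg : ∀ y ∈ W₀, g (-y) = - g y := by
      intro y hy
      have h := hgadd y hy (-y) (hW0neg y hy)
      rw [add_neg_cancel, hg0] at h
      exact eq_neg_of_add_eq_zero_right h.symm
    have hgint : ∀ m : ℤ, g ((m:ℂ) • x) = (m:ℝ) • g x := by
      intro m
      rcases Int.natAbs_eq m with h | h
      · rw [h, Int.cast_natCast, Int.cast_natCast]
        exact hgnat x hx m.natAbs
      · rw [h, Int.cast_neg, Int.cast_neg, Int.cast_natCast, Int.cast_natCast,
            neg_smul, hgneg _ (hW0smul _ x hx), hgnat x hx m.natAbs]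
        module
    have hgrat : ∀ q : ℚ, g ((q:ℂ) • x) = (q:ℝ) • g x := by
      intro q
      have hqx : (q:ℂ) • x ∈ W₀ := hW0smul _ x hx
      have h1 := hgnat _ hqx q.den
      have e1 : ((q.den:ℕ):ℂ) • ((q:ℂ) • x) = ((q.num:ℤ):ℂ) • x := by
        rw [smul_smul]
        congr 1
        have h : ((q.den:ℚ)) * q = (q.num:ℚ) := by
          exact Rat.den_mul_eq_num q
        exact_mod_cast h
      rw [e1, hgint q.num] at h1
      have hden : ((q.den:ℝ)) ≠ 0 := Nat.cast_ne_zero.mpr q.den_nz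
      have h2 := congrArg (fun z : G => ((q.den:ℝ))⁻¹ • z) h1.symm
      simp only [smul_smul] at h2
      rw [inv_mul_cancel₀ hden, one_smul] at h2
      rw [h2]
      congr 1
      rw [Rat.cast_def]
      field_simp
    intro t
    have hc1 : Continuous fun t : ℝ => g ((t:ℂ) • x) :=
      hgc.comp ((Complex.continuous_ofReal).smul continuous_const)
    have hc2 : Continuous fun t : ℝ => t • g x := continuous_id.smul continuous_const
    have keyq : ∀ q : ℚ, g (((q:ℝ):ℂ) • x) = ((q:ℝ)) • g x := by
      intro q
      push_cast
      exact hgrat q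
    have heq := DenseRange.equalizer Rat.denseRange_cast hc1 hc2 (funext fun q => keyq q)
    exact congrFun heq t
  have hSre1 : ∀ y ∈ W₀, ∀ x ∈ W₀, ∀ t : ℝ, S ((t:ℂ) • x) y = t • S x y := by
    intro y hy
    exact hrhom (fun v => S v y)
      (hSc.comp (continuous_id.prodMk continuous_const))
      (fun a ha b hb => hSadd1 a ha b hb y hy)
  have hSre2 : ∀ x ∈ W₀, ∀ y ∈ W₀, ∀ t : ℝ, S x ((t:ℂ) • y) = t • S x y := by
    intro x hx
    exact hrhom (fun v => S x v)
      (hSc.comp (continuous_const.prodMk continuous_id))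
      (fun a ha b hb => hSadd2 x hx a ha b hb)
  have hSmulC1 : ∀ (c:ℂ), ∀ x ∈ W₀, ∀ y ∈ W₀, S (c • x) y = c • S x y := by
    intro c x hx y hy
    have hdec : c • x = ((c.re:ℝ):ℂ) • x + ((c.im:ℝ):ℂ) • (Complex.I • x) := by
      rw [smul_smul, ← add_smul]
      congr 1
      exact (Complex.re_add_im c).symm
    rw [hdec, hSadd1 _ (hW0smul _ x hx) _ (hW0smul _ _ (hW0smul Complex.I x hx)) y hy,
        hSre1 y hy x hx c.re, hSre1 y hy _ (hW0smul Complex.I x hx) c.im, hSI1 x hx y hy]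
    exact aux_re_im_smul c (S x y)
  have hSmulC2 : ∀ (c:ℂ), ∀ x ∈ W₀, ∀ y ∈ W₀, S x (c • y) = (starRingEnd ℂ) c • S x y := by
    intro c x hx y hy
    have hdec : c • y = ((c.re:ℝ):ℂ) • y + ((c.im:ℝ):ℂ) • (Complex.I • y) := by
      rw [smul_smul, ← add_smul]
      congr 1
      exact (Complex.re_add_im c).symm
    rw [hdec, hSadd2 x hx _ (hW0smul _ y hy) _ (hW0smul _ _ (hW0smul Complex.I y hy)),
        hSre2 x hx y hy c.re, hSre2 x hx _ (hW0smul Complex.I y hy) c.im, hSI2 x hx y hy]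
    exact aux_re_im_smul' c (S x y)
  have hSorth : ∀ x ∈ W₀, ∀ y ∈ W₀, M.inner x y = 0 → S x y = 0 := by
    intro x hx y hy h
    have h2 : M.inner x (-y) = 0 := by rw [aux_inner_neg_right, h, neg_zero]
    have h3 : M.inner x (Complex.I • y) = 0 := by rw [M.inner_smul_complex, h, smul_zero]
    have h4 : M.inner x (-(Complex.I • y)) = 0 := by rw [aux_inner_neg_right, h3, neg_zero]
    simp only [hSdef]
    rw [hQOA x y h,
        show x - y = x + (-y) from sub_eq_add_neg x y, hQOA x (-y) h2, hQeven,
        hQOA x _ h3,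
        show x - Complex.I • y = x + -(Complex.I • y) from sub_eq_add_neg _ _,
        hQOA x _ h4, hQeven, hQI y hy]
    simp
  have hfTS : ∀ x ∈ W₀, f x = T x + S x x := by
    intro x hx
    have hSxx : S x x = Q x := by
      simp only [hSdef]
      have e1 : x + x = (2:ℂ) • x := (two_smul ℂ x).symm
      have e2 : x + Complex.I • x = ((1:ℂ) + Complex.I) • x := by
        rw [add_smul, one_smul]
      have e3 : x - Complex.I • x = ((1:ℂ) - Complex.I) • x := by
        rw [sub_smul, one_smul]
      rw [e1, e2, e3, sub_self, hQ0, hQhom0 _ x hx, hQhom0 _ x hx, hQhom0 _ x hx]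
      have n1 : Complex.normSq 2 = 4 := by
        norm_num [Complex.normSq_apply]
      have n2 : Complex.normSq ((1:ℂ) + Complex.I) = 2 := by
        norm_num [Complex.normSq_apply]
      have n3 : Complex.normSq ((1:ℂ) - Complex.I) = 2 := by
        norm_num [Complex.normSq_apply]
      rw [n1, n2, n3, sub_zero, add_sub_cancel_right, ← Complex.coe_smul, smul_smul]
      norm_num
    rw [hSxx]
    exact hTQ x
  exact ⟨T, S, hTc, hSc, hTadd0, hSadd1, hSadd2, hSmulC1, hSmulC2, hSorth, hfTS⟩
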